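/- If S is a semifilter with the Ramsey property and F is an ultrafilter on S (a maximal filter on the partial order (S, ⊆*)), then F is an ultrafilter on [ω]^ω, i.e., for every infinite A ⊆ ω, either A ∈ F or ω \ A ∈ F. -/
import Mathlib


def AlmostSub (A B : Set ℕ) : Prop := (A \ B).Finite

def IsSemifilter (S : Set (Set ℕ)) : Prop :=
  S.Nonempty ∧ S ≠ Set.univ ∧ ∀ A B : Set ℕ, A ∈ S → AlmostSub A B → B ∈ S

/-- The Ramsey property: if `A ∈ S` is a finite union, some piece is in `S`. -/
def RamseyProp (S : Set (Set ℕ)) : Prop :=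
  ∀ A ∈ S, ∀ (n : ℕ) (f : Fin n → Set ℕ), A = ⋃ i, f i → ∃ i, f i ∈ S

/-- A filter on the partial order `(S, ⊆*)`. -/
def FilterOn (S F : Set (Set ℕ)) : Prop :=
  F.Nonempty ∧ F ⊆ S ∧ (∀ A ∈ F, ∀ B : Set ℕ, AlmostSub A B → B ∈ F) ∧
    ∀ A ∈ F, ∀ B ∈ F, A ∩ B ∈ F

/-- An ultrafilter on `S`: a maximal filter on `(S, ⊆*)`. -/
def UltrafilterOn (S F : Set (Set ℕ)) : Prop :=
  FilterOn S F ∧ ∀ F' : Set (Set ℕ), FilterOn S F' → F ⊆ F' → F' = F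

lemma almostSub_of_subset {A B : Set ℕ} (h : A ⊆ B) : AlmostSub A B := by
  simp [AlmostSub, Set.diff_eq_empty.mpr h]

lemma almostSub_trans {A B C : Set ℕ} (h1 : AlmostSub A B) (h2 : AlmostSub B C) :
    AlmostSub A C := by
  have hsub : A \ C ⊆ (A \ B) ∪ (B \ C) := by
    intro x hx
    by_cases hb : x ∈ B <;> simp_all [Set.mem_diff]
  exact (h1.union h2).subset hsub

/-- If every member of a maximal filter meets `A` inside `S`, then `A ∈ F`. -/
lemma mem_of_inter_mem (S F : Set (Set ℕ)) (hS : IsSemifilter S)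
    (hF : UltrafilterOn S F) (A : Set ℕ) (h : ∀ X ∈ F, X ∩ A ∈ S) : A ∈ F := by
  obtain ⟨⟨hFne, hFS, hFup, hFint⟩, hmax⟩ := hF
  set F' := {B : Set ℕ | ∃ X ∈ F, AlmostSub (X ∩ A) B} with hF'def
  have hsub : F ⊆ F' := fun X hX =>
    ⟨X, hX, almostSub_of_subset Set.inter_subset_left⟩
  have hfil : FilterOn S F' := by
    refine ⟨hFne.mono hsub, ?_, ?_, ?_⟩
    · rintro B ⟨X, hX, hB⟩
      exact hS.2.2 (X ∩ A) B (h X hX) hB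
    · rintro B ⟨X, hX, hB⟩ C hBC
      exact ⟨X, hX, almostSub_trans hB hBC⟩
    · rintro B ⟨X, hX, hB⟩ C ⟨Y, hY, hC⟩
      refine ⟨X ∩ Y, hFint X hX Y hY, ?_⟩
      have hsub2 : (X ∩ Y ∩ A) \ (B ∩ C) ⊆ ((X ∩ A) \ B) ∪ ((Y ∩ A) \ C) := by
        intro x hx
        simp only [Set.mem_diff, Set.mem_inter_iff, Set.mem_union, not_and_or] at hx ⊢
        tauto
      exact (hB.union hC).subset hsub2
  have := hmax F' hfil hsub
  rw [← this]
  obtain ⟨X0, hX0⟩ := hFne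
  exact ⟨X0, hX0, almostSub_of_subset Set.inter_subset_right⟩

/-- (Glasner)  If `S` has the Ramsey property, every ultrafilter on `S` is an
ultrafilter on `[ω]^ω`. -/
theorem ultrafilterOn_ramsey_is_ultrafilter (S F : Set (Set ℕ))
    (hS : IsSemifilter S) (hR : RamseyProp S) (hF : UltrafilterOn S F) :
    ∀ A : Set ℕ, A.Infinite → A ∈ F ∨ Aᶜ ∈ F := by
  intro A _
  by_cases h1 : ∀ X ∈ F, X ∩ A ∈ S
  · exact Or.inl (mem_of_inter_mem S F hS hF A h1)
  by_cases h2 : ∀ X ∈ F, X ∩ Aᶜ ∈ S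
  · exact Or.inr (mem_of_inter_mem S F hS hF Aᶜ h2)
  exfalso
  push_neg at h1 h2
  obtain ⟨X, hX, hXA⟩ := h1
  obtain ⟨Y, hY, hYA⟩ := h2
  obtain ⟨⟨hFne, hFS, hFup, hFint⟩, hmax⟩ := hF
  have hZ : X ∩ Y ∈ F := hFint X hX Y hY
  have hcover : X ∩ Y = ⋃ i : Fin 2,
      (fun i : Fin 2 => if i = 0 then (X ∩ Y) ∩ A else (X ∩ Y) ∩ Aᶜ) i := by
    ext x
    simp only [Set.mem_iUnion, Fin.exists_fin_two]
    simp only [Set.mem_inter_iff, Set.mem_compl_iff]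
    by_cases hxA : x ∈ A <;> simp [hxA]
  obtain ⟨i, hi⟩ := hR (X ∩ Y) (hFS hZ) 2 _ hcover
  fin_cases i
  · simp only [Fin.isValue, if_pos rfl] at hi
    exact hXA (hS.2.2 _ _ hi (almostSub_of_subset
      (Set.inter_subset_inter_left A Set.inter_subset_left)))
  · simp only [Fin.isValue] at hi
    rw [if_neg (by decide)] at hi
    exact hYA (hS.2.2 _ _ hi (almostSub_of_subset
      (Set.inter_subset_inter_left Aᶜ Set.inter_subset_right)))
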